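/- Let T_i (i ∈ I) be integer matrices, ε_i ∈ {±1}, * an involution on I such that T_{i*} = ε_i T_i^T, and let d be a nonzero complex vector with T_i d = d_i d for each i. Set |X_i|² := ε_i d_i d_{i*}. Then each |X_i|² is a nonnegative real number. (This is the key step proving positivity of squared norms of simple objects in a fusion category over ℂ.) -/
import Mathlib


/-- Key step of positivity of squared norms in a fusion category over ℂ: given integer
matrices `T i`, signs `ε i = ±1` with `ε i * ε (σ i) = 1` and `T (σ i) = ε i • (T i)ᵀ`,
and a nonzero complex vector `d` with `T i d = d i • d`, each squared norm
`|X_i|² = ε i * d i * d (σ i)` is a nonnegative real number. -/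
theorem stmt6 (I : Type*) [Fintype I]
    (σ : I → I) (hσ : ∀ i, σ (σ i) = i)
    (T : I → Matrix I I ℤ)
    (ε : I → ℤ) (hε : ∀ i, ε i = 1 ∨ ε i = -1) (hεinv : ∀ i, ε i * ε (σ i) = 1)
    (hT : ∀ i, T (σ i) = ε i • (T i).transpose)
    (d : I → ℂ) (hdne : d ≠ 0)
    (heig : ∀ i, ((T i).map (fun x : ℤ => (x : ℂ))).mulVec d = d i • d) :
    ∀ i, ∃ r : ℝ, 0 ≤ r ∧ (ε i : ℂ) * (d i * d (σ i)) = (r : ℂ) := by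
  intro i
  set A : Matrix I I ℂ := (T i).map (fun x : ℤ => (x : ℂ)) with hAdef
  have hε2 : (ε i : ℂ) * (ε i : ℂ) = 1 := by
    rcases hε i with h | h <;> simp [h]
  have hAt : ((T (σ i)).map (fun x : ℤ => (x : ℂ))) = (ε i : ℂ) • A.transpose := by
    rw [hT i]
    ext j k
    simp [Matrix.map_apply, Matrix.transpose_apply, hAdef]
  have hw : A.transpose.mulVec d = ((ε i : ℂ) * d (σ i)) • d := by
    have h1 := heig (σ i)
    rw [hAt, Matrix.smul_mulVec] at h1
    have h2 := congrArg (fun v => (ε i : ℂ) • v) h1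
    simp only [smul_smul, hε2, one_smul] at h2
    exact h2
  have hAH : A.transpose.conjTranspose = A := by
    ext j k
    simp [Matrix.conjTranspose_apply, hAdef, Matrix.map_apply]
  set w : I → ℂ := A.transpose.mulVec d with hwdef
  have key1 : dotProduct (star w) d = d i * dotProduct (star d) d := by
    rw [hwdef, Matrix.star_mulVec, ← Matrix.dotProduct_mulVec, hAH, heig i,
      dotProduct_smul, smul_eq_mul]
  have key : dotProduct (star w) w
      = ((ε i : ℂ) * (d i * d (σ i))) * dotProduct (star d) d := by
    nth_rewrite 2 [hw]
    rw [dotProduct_smul, smul_eq_mul, key1]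
    ring
  have hsum : ∀ v : I → ℂ,
      dotProduct (star v) v = ((∑ j, Complex.normSq (v j) : ℝ) : ℂ) := by
    intro v
    simp only [dotProduct, Pi.star_apply, Complex.ofReal_sum]
    refine Finset.sum_congr rfl fun j _ => ?_
    rw [Complex.star_def, ← Complex.normSq_eq_conj_mul_self]
  have hNpos : (0 : ℝ) < ∑ j, Complex.normSq (d j) := by
    have : ∃ j, d j ≠ 0 := by
      by_contra h
      push_neg at h
      exact hdne (funext h)
    obtain ⟨j, hj⟩ := this
    refine Finset.sum_pos' (fun k _ => Complex.normSq_nonneg _) ⟨j, Finset.mem_univ j, ?_⟩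
    exact Complex.normSq_pos.mpr hj
  set S : ℝ := ∑ j, Complex.normSq (w j) with hSdef
  set N : ℝ := ∑ j, Complex.normSq (d j) with hNdef
  have hSnn : (0 : ℝ) ≤ S := Finset.sum_nonneg fun j _ => Complex.normSq_nonneg _
  have hSN : ((ε i : ℂ) * (d i * d (σ i))) * (N : ℂ) = (S : ℂ) := by
    rw [hSdef, hNdef, ← hsum d, ← hsum w]
    exact key.symm
  refine ⟨S / N, div_nonneg hSnn hNpos.le, ?_⟩
  have hNne : (N : ℂ) ≠ 0 := by exact_mod_cast hNpos.ne'
  rw [Complex.ofReal_div, eq_div_iff hNne, hSN]
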